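/- Corollary 1 (combined, explicit form): Suppose 0 ≤ q ≤ 1 and q < u < 1. For each N ≥ 1, let R_N be an N×N complex Hermitian positive semidefinite matrix whose largest eigenvalue λ_max(N) satisfies λ_max(N) ≤ a N^u for some a > 0 independent of N, and let v_N ∈ ℂ^N be a vector with |v_N(n)| = 1 for every n. Set Q(N) equal to the (real, nonnegative) quadratic form v_N^H R_N v_N. Then μ_C(N) → +∞ and σ_C(N)² → 0 as N → ∞. -/

import Mathlib

open Filter Real Matrix ComplexOrder

/-- Area of a single IRS reflecting element: `A_N = A₀ N^{-q}`. -/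
noncomputable def irsElemArea (A₀ q : ℝ) (N : ℕ) : ℝ := A₀ * (N : ℝ) ^ (-q)

/-- `ᾱ_N = α_r α_s A_N² / (1 + κ_r)`. -/
noncomputable def alphaBarN (A₀ αr αs κr q : ℝ) (N : ℕ) : ℝ :=
  αr * αs * (irsElemArea A₀ q N) ^ 2 / (1 + κr)

/-- `μ(N) = α_d A_M + κ_r ᾱ_N N² + ᾱ_N Q(N)`. -/
noncomputable def muN (A₀ αd αr αs AM κr q : ℝ) (Q : ℕ → ℝ) (N : ℕ) : ℝ :=
  αd * AM + κr * alphaBarN A₀ αr αs κr q N * (N : ℝ) ^ 2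
    + alphaBarN A₀ αr αs κr q N * Q N

/-- `η(N) = α_d A_M / M + ᾱ_N Q(N)`. -/
noncomputable def etaN (A₀ αd αr αs AM κr q : ℝ) (M : ℕ) (Q : ℕ → ℝ) (N : ℕ) : ℝ :=
  αd * AM / M + alphaBarN A₀ αr αs κr q N * Q N

/-- `ω(N) = 2 κ_r ᾱ_N N² + ᾱ_N Q(N)`. -/
noncomputable def omegaN (A₀ αr αs κr q : ℝ) (Q : ℕ → ℝ) (N : ℕ) : ℝ :=
  2 * κr * alphaBarN A₀ αr αs κr q N * (N : ℝ) ^ 2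
    + alphaBarN A₀ αr αs κr q N * Q N

/-- Asymptotic standard deviation of the capacity:
`σ_C(N) = (ρ M log₂ e / (1 + ρ M μ(N))) √(ω(N) η(N) + η(N) + ((M-1)/M) α_d A_M)`. -/
noncomputable def sigmaCap (A₀ αd αr αs AM ρ κr q : ℝ) (M : ℕ) (Q : ℕ → ℝ) (N : ℕ) : ℝ :=
  ρ * M * Real.logb 2 (Real.exp 1) / (1 + ρ * M * muN A₀ αd αr αs AM κr q Q N) *
    Real.sqrt (omegaN A₀ αr αs κr q Q N * etaN A₀ αd αr αs AM κr q M Q N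
      + etaN A₀ αd αr αs AM κr q M Q N + ((M : ℝ) - 1) / M * (αd * AM))

/-- Asymptotic mean of the capacity: `μ_C(N) = log₂(1 + ρ M μ(N))`. -/
noncomputable def muCap (A₀ αd αr αs AM ρ κr q : ℝ) (M : ℕ) (Q : ℕ → ℝ) (N : ℕ) : ℝ :=
  Real.logb 2 (1 + ρ * M * muN A₀ αd αr αs AM κr q Q N)

theorem quad_bound {N : ℕ} {R : Matrix (Fin N) (Fin N) ℂ} (hR : R.PosSemidef)
    {c : ℝ} (hc : ∀ i, hR.isHermitian.eigenvalues i ≤ c)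
    (v : Fin N → ℂ) (hv : ∀ n, ‖v n‖ = 1) :
    (star v ⬝ᵥ R *ᵥ v).re ≤ c * N := by
  have hH := hR.isHermitian
  set U : Matrix (Fin N) (Fin N) ℂ := (hH.eigenvectorUnitary : Matrix (Fin N) (Fin N) ℂ) with hU
  set w : Fin N → ℂ := star U *ᵥ v with hw
  have hsw : star w = star v ᵥ* U := by
    rw [hw, star_mulVec, star_eq_conjTranspose, conjTranspose_conjTranspose]
  have key : star v ⬝ᵥ R *ᵥ v
      = ∑ i, (hH.eigenvalues i : ℂ) * (star (w i) * w i) := by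
    conv_lhs => rw [hH.spectral_theorem, Unitary.conjStarAlgAut_apply]
    rw [← mulVec_mulVec, ← mulVec_mulVec, dotProduct_mulVec, ← hsw]
    simp only [dotProduct, mulVec_diagonal, Function.comp_apply, ← hU, ← hw]
    exact Finset.sum_congr rfl fun i _ => by
      simp only [Pi.star_apply]
      exact mul_left_comm (star (w i)) ((hH.eigenvalues i : ℂ)) (w i)
  have hnorm : star w ⬝ᵥ w = star v ⬝ᵥ v := by
    rw [hsw, hw, ← dotProduct_mulVec, mulVec_mulVec,
      (Matrix.mem_unitaryGroup_iff.mp hH.eigenvectorUnitary.2 : U * star U = 1), one_mulVec]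
  have hvv : (star v ⬝ᵥ v).re = (N : ℝ) := by
    simp only [dotProduct, Pi.star_apply]
    rw [Complex.re_sum]
    have : ∀ i : Fin N, (star (v i) * v i).re = 1 := by
      intro i
      rw [Complex.star_def, ← Complex.normSq_eq_conj_mul_self]
      simp [Complex.normSq_eq_norm_sq, hv i]
    rw [Finset.sum_congr rfl fun i _ => this i]
    simp
  have hwre : ∀ i, (star (w i) * w i).re = ‖w i‖ ^ 2 := by
    intro i
    rw [Complex.star_def, ← Complex.normSq_eq_conj_mul_self]
    simp [Complex.normSq_eq_norm_sq, ← Complex.ofReal_pow]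
  have hsum : ∑ i, ‖w i‖ ^ 2 = (N : ℝ) := by
    have := congrArg Complex.re hnorm
    rw [hvv] at this
    rw [← this]
    simp only [dotProduct, Pi.star_apply, Complex.re_sum]
    exact Finset.sum_congr rfl fun i _ => (hwre i).symm
  calc (star v ⬝ᵥ R *ᵥ v).re
      = ∑ i, hH.eigenvalues i * ‖w i‖ ^ 2 := by
        rw [key, Complex.re_sum]
        refine Finset.sum_congr rfl fun i _ => ?_
        rw [← hwre i]
        have h2 : (star (w i) * w i).im = 0 := by
          rw [Complex.star_def, ← Complex.normSq_eq_conj_mul_self]; simp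
        simp [Complex.mul_re, h2]
    _ ≤ ∑ i, c * ‖w i‖ ^ 2 := by
        refine Finset.sum_le_sum fun i _ => ?_
        exact mul_le_mul_of_nonneg_right (hc i) (sq_nonneg _)
    _ = c * N := by rw [← Finset.mul_sum, hsum]

theorem corollary_one_combined
    (A₀ αd αr αs AM ρ κr : ℝ) (hA₀ : 0 < A₀) (hαd : 0 < αd) (hαr : 0 < αr)
    (hαs : 0 < αs) (hAM : 0 < AM) (hρ : 0 < ρ) (hκr : 0 < κr)
    (M : ℕ) (hM : 1 ≤ M) (q u : ℝ) (hq0 : 0 ≤ q) (hq1 : q ≤ 1)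
    (hqu : q < u) (hu1 : u < 1)
    (R : ∀ N : ℕ, Matrix (Fin N) (Fin N) ℂ)
    (hPSD : ∀ N : ℕ, (R N).PosSemidef)
    (a : ℝ) (ha : 0 < a)
    (hEig : ∀ (N : ℕ) (i : Fin N), (hPSD N).isHermitian.eigenvalues i ≤ a * (N : ℝ) ^ u)
    (v : ∀ N : ℕ, Fin N → ℂ) (hv : ∀ (N : ℕ) (n : Fin N), ‖v N n‖ = 1)
    (Q : ℕ → ℝ) (hQ : ∀ N : ℕ, Q N = (star (v N) ⬝ᵥ (R N) *ᵥ (v N)).re) :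
    Tendsto (muCap A₀ αd αr αs AM ρ κr q M Q) atTop atTop ∧
      Tendsto (fun N : ℕ => (sigmaCap A₀ αd αr αs AM ρ κr q M Q N) ^ 2)
        atTop (nhds 0) := by
  have hq1' : q < 1 := lt_trans hqu hu1
  have hM0 : (0:ℝ) < M := by exact_mod_cast hM
  set c0 : ℝ := αr * αs * A₀ ^ 2 / (1 + κr) with hc0def
  have hκ1 : (0:ℝ) < 1 + κr := by linarith
  have hc0 : 0 < c0 := by rw [hc0def]; positivity
  -- basic facts about Q
  have hQ0 : ∀ N, 0 ≤ Q N := by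
    intro N
    rw [hQ N]
    have h := (hPSD N).dotProduct_mulVec_nonneg (v N)
    simpa using (Complex.le_def.mp h).1
  have hQle : ∀ N, Q N ≤ a * (N:ℝ) ^ u * N := by
    intro N
    rw [hQ N]
    exact quad_bound (hPSD N) (hEig N) (v N) (hv N)
  have hab0 : ∀ N, 0 ≤ alphaBarN A₀ αr αs κr q N := by
    intro N
    unfold alphaBarN irsElemArea
    positivity
  -- rewrite of alphaBarN for N ≥ 1
  have hab : ∀ N : ℕ, 1 ≤ N → alphaBarN A₀ αr αs κr q N = c0 * (N:ℝ) ^ (-(2*q)) := by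
    intro N hN
    have hx0 : (0:ℝ) < (N:ℝ) := by exact_mod_cast Nat.lt_of_lt_of_le Nat.zero_lt_one hN
    have h2 : (A₀ * (N:ℝ) ^ (-q)) ^ 2 = A₀ ^ 2 * (N:ℝ) ^ (-(2*q)) := by
      rw [mul_pow, sq ((N:ℝ) ^ (-q)), ← Real.rpow_add hx0]
      norm_num
      left
      congr 1
      ring
    unfold alphaBarN irsElemArea
    rw [h2, hc0def]
    ring
  -- exponent positivity
  have h2q : 0 < 2 - 2*q := by linarith
  -- lower bound on muN for N ≥ 1
  have hmu_ge : ∀ N : ℕ, 1 ≤ N →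
      κr * c0 * (N:ℝ) ^ (2 - 2*q) ≤ muN A₀ αd αr αs AM κr q Q N := by
    intro N hN
    have hx0 : (0:ℝ) < (N:ℝ) := by exact_mod_cast Nat.lt_of_lt_of_le Nat.zero_lt_one hN
    have E1 : (N:ℝ) ^ (-(2*q)) * (N:ℝ) ^ (2:ℕ) = (N:ℝ) ^ (2 - 2*q) := by
      rw [← Real.rpow_natCast (N:ℝ) 2, ← Real.rpow_add hx0]
      congr 1
      push_cast
      ring
    have e : κr * alphaBarN A₀ αr αs κr q N * (N:ℝ) ^ 2 = κr * c0 * (N:ℝ) ^ (2 - 2*q) := by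
      rw [hab N hN, ← E1]
      ring
    have h1 : 0 ≤ alphaBarN A₀ αr αs κr q N * Q N := mul_nonneg (hab0 N) (hQ0 N)
    unfold muN
    rw [e] at *
    nlinarith [mul_pos hαd hAM]
  constructor
  · -- Part 1 : muCap → ∞
    have hg : Tendsto (fun N : ℕ =>
        Real.logb 2 (1 + ρ * M * (κr * c0 * (N:ℝ) ^ (2 - 2*q)))) atTop atTop := by
      apply (Real.tendsto_logb_atTop one_lt_two).comp
      apply tendsto_atTop_add_const_left
      apply Tendsto.const_mul_atTop (by positivity : (0:ℝ) < ρ * M)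
      apply Tendsto.const_mul_atTop (by positivity : (0:ℝ) < κr * c0)
      exact (tendsto_rpow_atTop h2q).comp tendsto_natCast_atTop_atTop
    apply tendsto_atTop_mono' atTop _ hg
    filter_upwards [eventually_ge_atTop 1] with N hN
    unfold muCap
    have hx0 : (0:ℝ) < (N:ℝ) := by exact_mod_cast Nat.lt_of_lt_of_le Nat.zero_lt_one hN
    have hxp := Real.rpow_pos_of_pos hx0 (2-2*q)
    refine Real.logb_le_logb_of_le one_lt_two (by positivity) ?_
    have h1 : ρ * M * (κr * c0 * (N:ℝ) ^ (2 - 2*q)) ≤ ρ * M * muN A₀ αd αr αs AM κr q Q N :=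
        mul_le_mul_of_nonneg_left (hmu_ge N hN) (by positivity)
    linarith
  · -- Part 2 : sigmaCap² → 0
    set K1 : ℝ := ρ * M * Real.logb 2 (Real.exp 1) with hK1def
    set P : ℝ := ρ * M * (κr * c0) with hPdef
    have hP : 0 < P := by rw [hPdef]; positivity
    set h : ℝ := αd * AM / M with hhdef
    have hh : 0 < h := by rw [hhdef]; positivity
    -- nonnegativity of the variance pieces
    have hη0 : ∀ N, 0 ≤ etaN A₀ αd αr αs AM κr q M Q N := by
      intro N
      unfold etaN
      have := mul_nonneg (hab0 N) (hQ0 N)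
      positivity
    have hω0 : ∀ N, 0 ≤ omegaN A₀ αr αs κr q Q N := by
      intro N
      unfold omegaN
      have h1 := mul_nonneg (hab0 N) (hQ0 N)
      have h2 : (0:ℝ) ≤ 2 * κr * alphaBarN A₀ αr αs κr q N * (N:ℝ)^2 := by
        have := hab0 N
        positivity
      linarith
    have hS0 : ∀ N, 0 ≤ omegaN A₀ αr αs κr q Q N * etaN A₀ αd αr αs AM κr q M Q N
        + etaN A₀ αd αr αs AM κr q M Q N + ((M : ℝ) - 1) / M * (αd * AM) := by
      intro N
      have h1 := mul_nonneg (hω0 N) (hη0 N)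
      have h2 : (0:ℝ) ≤ ((M:ℝ)-1)/M * (αd*AM) := by
        apply mul_nonneg
        · apply div_nonneg _ hM0.le
          have : (1:ℝ) ≤ (M:ℝ) := by exact_mod_cast hM
          linarith
        · positivity
      have := hη0 N
      linarith
    -- express sigma² as a quotient
    have hsig : ∀ N, (sigmaCap A₀ αd αr αs AM ρ κr q M Q N) ^ 2 =
        K1 ^ 2 * (omegaN A₀ αr αs κr q Q N * etaN A₀ αd αr αs AM κr q M Q N
          + etaN A₀ αd αr αs AM κr q M Q N + ((M : ℝ) - 1) / M * (αd * AM))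
        / (1 + ρ * M * muN A₀ αd αr αs AM κr q Q N) ^ 2 := by
      intro N
      unfold sigmaCap
      rw [mul_pow, div_pow, Real.sq_sqrt (hS0 N), hK1def]
      ring
    -- the squeeze bound function
    have hgtends : Tendsto (fun N : ℕ => K1 ^ 2 *
      ((2*κr + a) * c0 * h * (N:ℝ) ^ (-(2 - 2*q))
        + (2*κr + a) * c0 ^ 2 * a * (N:ℝ) ^ (-(1 - u))
        + (h + αd * AM) * (N:ℝ) ^ (-(4 - 4*q))
        + c0 * a * (N:ℝ) ^ (-(3 - u - 2*q))) / P ^ 2) atTop (nhds 0) := by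
      have base : ∀ (c e : ℝ), 0 < e → Tendsto (fun N : ℕ => c * (N:ℝ) ^ (-e)) atTop (nhds 0) := by
        intro c e he
        have := ((tendsto_rpow_neg_atTop he).comp tendsto_natCast_atTop_atTop).const_mul c
        simpa using this
      have h1 := base ((2*κr + a) * c0 * h) (2 - 2*q) (by linarith)
      have h2 := base ((2*κr + a) * c0 ^ 2 * a) (1 - u) (by linarith)
      have h3 := base (h + αd * AM) (4 - 4*q) (by linarith)
      have h4 := base (c0 * a) (3 - u - 2*q) (by linarith)
      have := ((((h1.add h2).add h3).add h4).const_mul (K1 ^ 2)).div_const (P ^ 2)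
      simpa [mul_add] using this
    apply squeeze_zero' (Eventually.of_forall fun N => sq_nonneg _) _ hgtends
    filter_upwards [eventually_ge_atTop 1] with N hN
    -- now the pointwise bound for N ≥ 1
    have hx0 : (0:ℝ) < (N:ℝ) := by exact_mod_cast Nat.lt_of_lt_of_le Nat.zero_lt_one hN
    have hx1 : (1:ℝ) ≤ (N:ℝ) := by exact_mod_cast hN
    set x : ℝ := (N:ℝ) with hxdef
    have xp : ∀ s : ℝ, 0 < x ^ s := fun s => Real.rpow_pos_of_pos hx0 s
    have hxe : ∀ s t : ℝ, x ^ s * x ^ t = x ^ (s + t) := fun s t => (Real.rpow_add hx0 s t).symm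
    -- E1 : x^{-2q} x² = x^{2-2q}
    have E1 : x ^ (-(2*q)) * x ^ (2:ℕ) = x ^ (2 - 2*q) := by
      rw [← Real.rpow_natCast x 2, hxe]
      congr 1
      push_cast
      ring
    -- bound on ᾱ Q
    have habQ : alphaBarN A₀ αr αs κr q N * Q N ≤ c0 * a * x ^ (1 + u - 2*q) := by
      rw [hab N hN]
      have hstep : Q N ≤ a * x ^ u * x := hQle N
      have h1 : c0 * x ^ (-(2*q)) * Q N ≤ c0 * x ^ (-(2*q)) * (a * x ^ u * x) := by
        apply mul_le_mul_of_nonneg_left hstep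
        positivity
      refine h1.trans (le_of_eq ?_)
      have e2 : x ^ (-(2*q)) * (x ^ u * x) = x ^ (1 + u - 2*q) := by
        rw [← Real.rpow_add_one hx0.ne' u, hxe]
        congr 1
        ring
      calc c0 * x ^ (-(2*q)) * (a * x ^ u * x)
          = c0 * a * (x ^ (-(2*q)) * (x ^ u * x)) := by ring
        _ = c0 * a * x ^ (1 + u - 2*q) := by rw [e2]
    -- bound on η
    have hηle : etaN A₀ αd αr αs AM κr q M Q N ≤ h + c0 * a * x ^ (1 + u - 2*q) := by
      unfold etaN
      rw [hhdef]
      exact add_le_add_right habQ _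
    -- bound on ω
    have hE3 : x ^ (1 + u - 2*q) ≤ x ^ (2 - 2*q) :=
      Real.rpow_le_rpow_of_exponent_le hx1 (by linarith)
    have hωle : omegaN A₀ αr αs κr q Q N ≤ (2*κr + a) * c0 * x ^ (2 - 2*q) := by
      unfold omegaN
      have e : 2 * κr * alphaBarN A₀ αr αs κr q N * x ^ (2:ℕ)
          = 2 * κr * c0 * x ^ (2 - 2*q) := by
        rw [hab N hN, ← E1]; ring
      rw [e]
      have : alphaBarN A₀ αr αs κr q N * Q N ≤ a * c0 * x ^ (2 - 2*q) := by
        refine habQ.trans ?_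
        have := mul_le_mul_of_nonneg_left hE3 (by positivity : (0:ℝ) ≤ c0 * a)
        calc c0 * a * x ^ (1 + u - 2*q) ≤ c0 * a * x ^ (2 - 2*q) := this
          _ = a * c0 * x ^ (2 - 2*q) := by ring
      linarith
    -- the quotient bound
    set S : ℝ := omegaN A₀ αr αs κr q Q N * etaN A₀ αd αr αs AM κr q M Q N
        + etaN A₀ αd αr αs AM κr q M Q N + ((M : ℝ) - 1) / M * (αd * AM) with hSdef
    set Sb : ℝ := (2*κr + a) * c0 * x ^ (2 - 2*q) * (h + c0 * a * x ^ (1 + u - 2*q))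
        + (h + c0 * a * x ^ (1 + u - 2*q)) + αd * AM with hSbdef
    have hSb : S ≤ Sb := by
      rw [hSdef, hSbdef]
      have hM1 : ((M:ℝ) - 1) / M * (αd * AM) ≤ αd * AM := by
        have h1 : ((M:ℝ) - 1) / M ≤ 1 := by
          rw [div_le_one hM0]; linarith
        exact mul_le_of_le_one_left (by positivity) h1
      have hωη : omegaN A₀ αr αs κr q Q N * etaN A₀ αd αr αs AM κr q M Q N
          ≤ (2*κr + a) * c0 * x ^ (2 - 2*q) * (h + c0 * a * x ^ (1 + u - 2*q)) := by
        apply mul_le_mul hωle hηle (hη0 N)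
        positivity
      linarith
    have hDge : P * x ^ (2 - 2*q) ≤ 1 + ρ * M * muN A₀ αd αr αs AM κr q Q N := by
      have := hmu_ge N hN
      have h1 : P * x ^ (2 - 2*q) = ρ * M * (κr * c0 * x ^ (2 - 2*q)) := by
        rw [hPdef]; ring
      rw [h1]
      have h2 : ρ * M * (κr * c0 * x ^ (2 - 2*q)) ≤ ρ * M * muN A₀ αd αr αs AM κr q Q N :=
        mul_le_mul_of_nonneg_left (hmu_ge N hN) (by positivity)
      linarith
    have hPx : 0 < P * x ^ (2 - 2*q) := by positivity
    -- squeeze step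
    rw [hsig N]
    have hstep1 : K1 ^ 2 * S / (1 + ρ * M * muN A₀ αd αr αs AM κr q Q N) ^ 2
        ≤ K1 ^ 2 * Sb / (P * x ^ (2 - 2*q)) ^ 2 := by
      exact div_le_div₀ (mul_nonneg (sq_nonneg K1) ((hS0 N).trans hSb))
        (mul_le_mul_of_nonneg_left hSb (sq_nonneg K1)) (by positivity)
        (pow_le_pow_left₀ hPx.le hDge 2)
    refine hstep1.trans (le_of_eq ?_)
    -- final algebraic identity
    have m1 : x ^ (-(2 - 2*q)) * x ^ (4 - 4*q) = x ^ (2 - 2*q) := by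
      rw [hxe]; congr 1; ring
    have m2 : x ^ (-(1 - u)) * x ^ (4 - 4*q) = x ^ (3 + u - 4*q) := by
      rw [hxe]; congr 1; ring
    have m3 : x ^ (-(4 - 4*q)) * x ^ (4 - 4*q) = 1 := by
      rw [hxe]
      norm_num
    have m4 : x ^ (-(3 - u - 2*q)) * x ^ (4 - 4*q) = x ^ (1 + u - 2*q) := by
      rw [hxe]; congr 1; ring
    have hX : (x ^ (2 - 2*q)) ^ (2:ℕ) = x ^ (4 - 4*q) := by
      rw [sq (x ^ (2 - 2*q)), hxe]
      congr 1; ring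
    have e4 : x ^ (2 - 2*q) * x ^ (1 + u - 2*q) = x ^ (3 + u - 4*q) := by
      rw [hxe]; congr 1; ring
    have hSbexp : Sb = (2*κr + a) * c0 * h * x ^ (2 - 2*q)
        + (2*κr + a) * c0 ^ 2 * a * x ^ (3 + u - 4*q)
        + (h + αd * AM)
        + c0 * a * x ^ (1 + u - 2*q) := by
      rw [hSbdef, ← e4]
      ring
    have expand : ((2*κr + a) * c0 * h * x ^ (-(2 - 2*q))
        + (2*κr + a) * c0 ^ 2 * a * x ^ (-(1 - u))
        + (h + αd * AM) * x ^ (-(4 - 4*q))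
        + c0 * a * x ^ (-(3 - u - 2*q))) * x ^ (4 - 4*q)
        = (2*κr + a) * c0 * h * x ^ (2 - 2*q)
        + (2*κr + a) * c0 ^ 2 * a * x ^ (3 + u - 4*q)
        + (h + αd * AM)
        + c0 * a * x ^ (1 + u - 2*q) := by
      calc ((2*κr + a) * c0 * h * x ^ (-(2 - 2*q))
          + (2*κr + a) * c0 ^ 2 * a * x ^ (-(1 - u))
          + (h + αd * AM) * x ^ (-(4 - 4*q))
          + c0 * a * x ^ (-(3 - u - 2*q))) * x ^ (4 - 4*q)
          = (2*κr + a) * c0 * h * (x ^ (-(2 - 2*q)) * x ^ (4 - 4*q))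
          + (2*κr + a) * c0 ^ 2 * a * (x ^ (-(1 - u)) * x ^ (4 - 4*q))
          + (h + αd * AM) * (x ^ (-(4 - 4*q)) * x ^ (4 - 4*q))
          + c0 * a * (x ^ (-(3 - u - 2*q)) * x ^ (4 - 4*q)) := by ring
        _ = _ := by rw [m1, m2, m3, m4]; ring
    rw [mul_pow P (x ^ (2 - 2*q)) 2, hX, div_eq_div_iff (by positivity) (by positivity), hSbexp, ← expand]
    ring
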